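/- The Ewens sampling formula defines a probability distribution on set partitions: for every n ≥ 1 and θ > 0, the sum over all set partitions p = {C_1,…,C_k} of {1,…,n} of θ^k · Γ(θ)/Γ(θ+n) · ∏_{j=1}^{k} (|C_j| - 1)! equals 1. -/

import Mathlib

open scoped BigOperators

open Finset

namespace EwensAux

variable {α : Type*} [DecidableEq α] {s : Finset α} {a : α}

lemma fp_ext {s : Finset α} {p q : Finpartition s} (h : p.parts = q.parts) : p = q := by
  cases p; cases q; congr

lemma not_mem_part (ha : a ∉ s) (p : Finpartition s) {C : Finset α} (hC : C ∈ p.parts) :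
    a ∉ C := fun h => ha (p.le hC h)

/-- The Ewens weight of a partition (without the Gamma normalization). -/
noncomputable def w (θ : ℝ) (p : Finpartition s) : ℝ :=
  θ ^ p.parts.card * ∏ C ∈ p.parts, ((C.card - 1).factorial : ℝ)

/-- Add `a` as a new singleton block. -/
def insertSingleton (ha : a ∉ s) (p : Finpartition s) : Finpartition (insert a s) :=
  p.extend (b := {a}) (by simp)
    (by simp [Finset.disjoint_singleton_right, ha])
    (by rw [sup_eq_union, union_comm, ← insert_eq])

lemma insertSingleton_parts (ha : a ∉ s) (p : Finpartition s) :
    (insertSingleton ha p).parts = insert {a} p.parts := rfl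

/-- Add `a` to the existing block `C`. -/
def insertBlock (ha : a ∉ s) (p : Finpartition s) (C : Finset α) (hC : C ∈ p.parts) :
    Finpartition (insert a s) where
  parts := insert (insert a C) (p.parts.erase C)
  supIndep := by
    rw [supIndep_iff_pairwiseDisjoint, coe_insert]
    refine Set.PairwiseDisjoint.insert
      (p.disjoint.subset (coe_subset.2 (erase_subset _ _))) ?_
    intro D hD hne
    rw [mem_coe, mem_erase] at hD
    have h1 : Disjoint C D := p.disjoint hC hD.2 (Ne.symm hD.1)
    have h2 : a ∉ D := not_mem_part ha p hD.2
    simp only [id]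
    rw [Finset.disjoint_insert_left]
    exact ⟨h2, h1⟩
  sup_parts := by
    have h : C ⊔ (p.parts.erase C).sup id = s := by
      have h0 : (insert C (p.parts.erase C)).sup id = p.parts.sup id := by rw [insert_erase hC]
      simp only [sup_insert, id] at h0
      rw [h0, p.sup_parts]
    rw [sup_insert, id]
    rw [sup_eq_union] at h ⊢
    rw [insert_union, h]
  bot_notMem := by
    intro h
    rcases mem_insert.1 h with h | h
    · exact (insert_nonempty a C).ne_empty h.symm
    · exact p.bot_notMem (mem_of_mem_erase h)

lemma insertBlock_parts (ha : a ∉ s) (p : Finpartition s) (C : Finset α) (hC : C ∈ p.parts) :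
    (insertBlock ha p C hC).parts = insert (insert a C) (p.parts.erase C) := rfl

lemma singleton_not_mem (ha : a ∉ s) (p : Finpartition s) : ({a} : Finset α) ∉ p.parts :=
  fun h => not_mem_part ha p h (mem_singleton_self a)

lemma insertA_not_mem_erase (ha : a ∉ s) (p : Finpartition s) (C D : Finset α) :
    insert a C ∉ p.parts.erase D := fun h =>
  not_mem_part ha p (mem_of_mem_erase h) (mem_insert_self a C)

lemma w_insertSingleton (θ : ℝ) (ha : a ∉ s) (p : Finpartition s) :
    w θ (insertSingleton ha p) = θ * w θ p := by
  rw [w, w, insertSingleton_parts, card_insert_of_notMem (singleton_not_mem ha p),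
    prod_insert (singleton_not_mem ha p)]
  simp [pow_succ]
  ring

lemma w_insertBlock (θ : ℝ) (ha : a ∉ s) (p : Finpartition s) (C : Finset α)
    (hC : C ∈ p.parts) : w θ (insertBlock ha p C hC) = C.card * w θ p := by
  have haC : a ∉ C := not_mem_part ha p hC
  have hCpos : 0 < C.card := card_pos.2 (p.nonempty_of_mem_parts hC)
  have hcard : (insertBlock ha p C hC).parts.card = p.parts.card := by
    rw [insertBlock_parts, card_insert_of_notMem (insertA_not_mem_erase ha p C C),
      card_erase_of_mem hC]
    have : 0 < p.parts.card := card_pos.2 ⟨C, hC⟩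
    omega
  rw [w, w, hcard, insertBlock_parts, prod_insert (insertA_not_mem_erase ha p C C)]
  have h1 : (insert a C).card = C.card + 1 := card_insert_of_notMem haC
  have h2 : ∏ D ∈ p.parts, ((D.card - 1).factorial : ℝ)
      = ((C.card - 1).factorial : ℝ) * ∏ D ∈ p.parts.erase C, ((D.card - 1).factorial : ℝ) :=
    (Finset.mul_prod_erase _ _ hC).symm
  rw [h1, h2]
  have h3 : (C.card + 1 - 1).factorial = C.card * (C.card - 1).factorial := by
    obtain ⟨m, hm⟩ : ∃ m, C.card = m + 1 := ⟨C.card - 1, by omega⟩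
    rw [hm]
    simp [Nat.factorial_succ]
  rw [h3]
  push_cast [Nat.cast_mul]
  ring

/-- The gluing map from (partition of `s`, optional block receiving `a`) to
partitions of `insert a s`. -/
def F (ha : a ∉ s) : (Σ p : Finpartition s, Option {C // C ∈ p.parts}) →
    Finpartition (insert a s)
  | ⟨p, none⟩ => insertSingleton ha p
  | ⟨p, some C⟩ => insertBlock ha p C.1 C.2

lemma part_insertSingleton (ha : a ∉ s) (p : Finpartition s) :
    (insertSingleton ha p).part a = {a} :=
  Finpartition.part_eq_of_mem _ (by rw [insertSingleton_parts]; exact mem_insert_self _ _)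
    (mem_singleton_self a)

lemma part_insertBlock (ha : a ∉ s) (p : Finpartition s) (C : Finset α) (hC : C ∈ p.parts) :
    (insertBlock ha p C hC).part a = insert a C :=
  Finpartition.part_eq_of_mem _ (by rw [insertBlock_parts]; exact mem_insert_self _ _)
    (mem_insert_self a C)

lemma F_inj (ha : a ∉ s) : Function.Injective (F ha) := by
  rintro ⟨p, o⟩ ⟨q, o'⟩ h
  match o, o' with
  | none, none =>
    have hp : insert ({a} : Finset α) p.parts = insert {a} q.parts := by
      have this : (F ha ⟨p, none⟩).parts = (F ha ⟨q, none⟩).parts := by rw [h]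
      rwa [F, F, insertSingleton_parts, insertSingleton_parts] at this
    have : p.parts = q.parts := by
      have h1 := congrArg (fun t => t.erase ({a} : Finset α)) hp
      simpa [erase_insert (singleton_not_mem ha p), erase_insert (singleton_not_mem ha q)]
        using h1
    have : p = q := fp_ext this
    subst this; rfl
  | none, some C =>
    exfalso
    have h1 : ({a} : Finset α) = insert a C.1 := by
      have this : (F ha ⟨p, none⟩).part a = (F ha ⟨q, some C⟩).part a := by rw [h]
      rwa [F, F, part_insertSingleton, part_insertBlock] at this
    obtain ⟨b, hb⟩ := q.nonempty_of_mem_parts C.2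
    have hba : b ≠ a := fun e => (not_mem_part ha q C.2) (e ▸ hb)
    have : b ∈ ({a} : Finset α) := h1 ▸ mem_insert_of_mem hb
    exact hba (mem_singleton.1 this)
  | some C, none =>
    exfalso
    have h1 : insert a C.1 = ({a} : Finset α) := by
      have this : (F ha ⟨p, some C⟩).part a = (F ha ⟨q, none⟩).part a := by rw [h]
      rwa [F, F, part_insertBlock, part_insertSingleton] at this
    obtain ⟨b, hb⟩ := p.nonempty_of_mem_parts C.2
    have hba : b ≠ a := fun e => (not_mem_part ha p C.2) (e ▸ hb)
    have : b ∈ ({a} : Finset α) := h1 ▸ mem_insert_of_mem hb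
    exact hba (mem_singleton.1 this)
  | some C, some D =>
    have hCD : C.1 = D.1 := by
      have h1 : insert a C.1 = insert a D.1 := by
        have this : (F ha ⟨p, some C⟩).part a = (F ha ⟨q, some D⟩).part a := by rw [h]
        rwa [F, F, part_insertBlock, part_insertBlock] at this
      have h2 := congrArg (fun t => t.erase a) h1
      simpa [erase_insert (not_mem_part ha p C.2), erase_insert (not_mem_part ha q D.2)]
        using h2
    have hparts : p.parts = q.parts := by
      have h1 : insert (insert a C.1) (p.parts.erase C.1)
          = insert (insert a D.1) (q.parts.erase D.1) := by
        have this : (F ha ⟨p, some C⟩).parts = (F ha ⟨q, some D⟩).parts := by rw [h]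
        rwa [F, F, insertBlock_parts, insertBlock_parts] at this
      rw [← hCD] at h1
      have h2 := congrArg (fun t => t.erase (insert a C.1)) h1
      simp only [erase_insert (insertA_not_mem_erase ha p C.1 C.1),
        erase_insert (insertA_not_mem_erase ha q C.1 C.1)] at h2
      have := congrArg (fun t => insert C.1 t) h2
      simpa [insert_erase C.2, insert_erase (hCD ▸ D.2)] using this
    have hpq : p = q := fp_ext hparts
    subst hpq
    have : C = D := Subtype.ext hCD
    subst this; rfl

lemma F_surj (ha : a ∉ s) : Function.Surjective (F ha) := by
  intro q
  have haIn : a ∈ insert a s := mem_insert_self a s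
  have hDmem : q.part a ∈ q.parts := q.part_mem.2 haIn
  have haD : a ∈ q.part a := q.mem_part haIn
  -- elements of other parts avoid `a`
  have key : ∀ E ∈ q.parts, a ∈ E → E = q.part a := fun E hE haE =>
    (q.part_eq_of_mem hE haE).symm
  by_cases hsing : q.part a = {a}
  · -- `a` is in a singleton block
    have hsingmem : ({a} : Finset α) ∈ q.parts := hsing ▸ hDmem
    have hsub : ∀ E ∈ q.parts.erase {a}, E ⊆ s := by
      intro E hE x hx
      have hEq := mem_of_mem_erase hE
      have hxmem : x ∈ insert a s := q.le hEq hx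
      rcases mem_insert.1 hxmem with rfl | hxs
      · exact absurd ((key E hEq hx).trans hsing) (ne_of_mem_erase hE)
      · exact hxs
    refine ⟨⟨⟨q.parts.erase {a}, q.supIndep.subset (erase_subset _ _), ?_,
        fun h => q.bot_notMem (mem_of_mem_erase h)⟩, none⟩, ?_⟩
    · apply le_antisymm
      · exact Finset.sup_le fun E hE => hsub E hE
      · intro x hx
        obtain ⟨E, hE, hxE⟩ := q.exists_mem (mem_insert_of_mem hx)
        have hne : E ≠ {a} := by
          intro h; subst h
          exact ha (by rwa [mem_singleton.1 hxE] at hx)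
        exact mem_sup.2 ⟨E, mem_erase.2 ⟨hne, hE⟩, hxE⟩
    · apply fp_ext
      rw [F, insertSingleton_parts]
      show insert ({a} : Finset α) (q.parts.erase {a}) = q.parts
      exact insert_erase hsingmem
  · -- `a` is in a block with other elements
    set D := q.part a with hD
    have hCne : (D.erase a).Nonempty := by
      rw [nonempty_iff_ne_empty]
      intro h
      rcases (Finset.erase_eq_empty_iff D a).1 h with h' | h'
      · exact (q.nonempty_of_mem_parts hDmem).ne_empty h'
      · exact hsing h'
    have hCsub : D.erase a ⊆ s := by
      intro x hx
      have hxD : x ∈ D := mem_of_mem_erase hx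
      have : x ∈ insert a s := q.le hDmem hxD
      rcases mem_insert.1 this with rfl | h
      · exact absurd rfl (ne_of_mem_erase hx)
      · exact h
    have hEsub : ∀ E ∈ q.parts.erase D, E ⊆ s := by
      intro E hE x hx
      have hEq := mem_of_mem_erase hE
      have : x ∈ insert a s := q.le hEq hx
      rcases mem_insert.1 this with rfl | hxs
      · exact absurd (key E hEq hx) (ne_of_mem_erase hE)
      · exact hxs
    have hCnotin : D.erase a ∉ q.parts.erase D := by
      intro h
      obtain ⟨b, hb⟩ := hCne
      exact (ne_of_mem_erase h)
        (q.eq_of_mem_parts (mem_of_mem_erase h) hDmem hb (mem_of_mem_erase hb))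
    refine ⟨⟨⟨insert (D.erase a) (q.parts.erase D), ?_, ?_, ?_⟩,
        some ⟨D.erase a, mem_insert_self _ _⟩⟩, ?_⟩
    · rw [supIndep_iff_pairwiseDisjoint, coe_insert]
      refine Set.PairwiseDisjoint.insert
        (q.disjoint.subset (coe_subset.2 (erase_subset _ _))) ?_
      intro E hE hne
      rw [mem_coe, mem_erase] at hE
      exact Disjoint.mono_left (erase_subset a D) (q.disjoint hDmem hE.2 (Ne.symm hE.1))
    · apply le_antisymm
      · rw [sup_insert]
        exact _root_.sup_le (fun x hx => hCsub hx) (Finset.sup_le fun E hE => hEsub E hE)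
      · intro x hx
        obtain ⟨E, hE, hxE⟩ := q.exists_mem (mem_insert_of_mem hx)
        have hxa : x ≠ a := fun h => ha (h ▸ hx)
        by_cases hED : E = D
        · exact mem_sup.2 ⟨D.erase a, mem_insert_self _ _, mem_erase.2 ⟨hxa, hED ▸ hxE⟩⟩
        · exact mem_sup.2 ⟨E, mem_insert_of_mem (mem_erase.2 ⟨hED, hE⟩), hxE⟩
    · intro h
      rcases mem_insert.1 h with h | h
      · exact hCne.ne_empty h.symm
      · exact q.bot_notMem (mem_of_mem_erase h)
    · apply fp_ext
      rw [F, insertBlock_parts]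
      have h1 : insert a (D.erase a) = D := insert_erase haD
      have h2 : (insert (D.erase a) (q.parts.erase D)).erase (D.erase a)
          = q.parts.erase D := erase_insert hCnotin
      rw [h2, h1, insert_erase hDmem]

lemma key_identity (θ : ℝ) (s : Finset α) :
    ∑ p : Finpartition s, w θ p = ∏ i ∈ Finset.range s.card, (θ + i) := by
  classical
  induction s using Finset.induction_on with
  | empty =>
    rw [Finset.card_empty, Finset.range_zero, Finset.prod_empty]
    have huniq : ∀ p : Finpartition (∅ : Finset α), w θ p = 1 := by
      intro p
      have : p.parts = ∅ := Finpartition.parts_eq_empty_iff.2 rfl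
      simp [w, this]
    have hcard : Fintype.card (Finpartition (∅ : Finset α)) = 1 := by
      refine Fintype.card_eq_one_iff.2 ⟨⟨∅, by simp, by simp, by simp⟩, fun p => fp_ext ?_⟩
      exact (Finpartition.parts_eq_empty_iff.2 rfl)
    rw [Finset.sum_congr rfl (fun p _ => huniq p), Finset.sum_const, Finset.card_univ, hcard,
      one_smul]
  | @insert a s ha ih =>
    rw [card_insert_of_notMem ha, Finset.prod_range_succ, ← ih]
    have hbij : Function.Bijective (F ha) := ⟨F_inj ha, F_surj ha⟩
    rw [← Function.Bijective.sum_comp hbij (w θ)]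
    rw [← Finset.univ_sigma_univ, Finset.sum_sigma]
    have step : ∀ p : Finpartition s,
        ∑ o : Option {C // C ∈ p.parts}, w θ (F ha ⟨p, o⟩) = w θ p * (θ + s.card) := by
      intro p
      rw [Fintype.sum_option]
      have h1 : w θ (F ha ⟨p, none⟩) = θ * w θ p := w_insertSingleton θ ha p
      have h2 : ∀ C : {C // C ∈ p.parts}, w θ (F ha ⟨p, some C⟩) = C.1.card * w θ p :=
        fun C => w_insertBlock θ ha p C.1 C.2
      rw [h1]
      rw [Finset.sum_congr rfl (fun C _ => h2 C)]
      rw [← Finset.sum_mul]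
      have h3 : ∑ C : {C // C ∈ p.parts}, (C.1.card : ℝ) = s.card := by
        rw [Finset.sum_coe_sort p.parts (fun C => (C.card : ℝ)), ← Nat.cast_sum,
          p.sum_card_parts]
      rw [h3]
      ring
    rw [Finset.sum_congr rfl (fun p _ => step p), ← Finset.sum_mul]

lemma gamma_ascending (θ : ℝ) (hθ : 0 < θ) (n : ℕ) :
    Real.Gamma (θ + n) = Real.Gamma θ * ∏ i ∈ Finset.range n, (θ + i) := by
  induction n with
  | zero => simp
  | succ n ih =>
    have h : θ + ((n : ℝ) + 1) = (θ + n) + 1 := by ring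
    have hne : θ + (n : ℝ) ≠ 0 := by positivity
    rw [Nat.cast_succ, h, Real.Gamma_add_one hne, ih, Finset.prod_range_succ]
    ring

end EwensAux

/-- The Ewens sampling formula defines a probability distribution on set
partitions of `{1, …, n}`: the weights
`θ^{n(p)} Γ(θ)/Γ(θ+n) ∏_j Γ(e_j)` sum to one over all set partitions `p`. -/
theorem ewens_sampling_formula_sums_to_one (n : ℕ) (hn : 1 ≤ n) (θ : ℝ)
    (hθ : 0 < θ) :
    ∑ p : Finpartition (Finset.univ : Finset (Fin n)),
      θ ^ p.parts.card * Real.Gamma θ / Real.Gamma (θ + n) *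
        ∏ C ∈ p.parts, (Nat.factorial (C.card - 1) : ℝ)
      = 1 := by
  classical
  have hrw : ∀ p : Finpartition (Finset.univ : Finset (Fin n)),
      θ ^ p.parts.card * Real.Gamma θ / Real.Gamma (θ + n) *
        ∏ C ∈ p.parts, (Nat.factorial (C.card - 1) : ℝ)
      = Real.Gamma θ / Real.Gamma (θ + n) * EwensAux.w θ p := by
    intro p
    rw [EwensAux.w]
    ring
  rw [Finset.sum_congr rfl (fun p _ => hrw p), ← Finset.mul_sum]
  rw [EwensAux.key_identity θ (Finset.univ : Finset (Fin n))]
  have hcard : (Finset.univ : Finset (Fin n)).card = n := by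
    rw [Finset.card_univ, Fintype.card_fin]
  rw [hcard, EwensAux.gamma_ascending θ hθ n]
  have h1 : Real.Gamma θ ≠ 0 := ne_of_gt (Real.Gamma_pos_of_pos hθ)
  have h2 : (∏ i ∈ Finset.range n, (θ + i)) ≠ 0 := by
    apply Finset.prod_ne_zero_iff.2
    intro i _
    positivity
  field_simp
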